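/- Let q = 2^n. The number of pairs (t, (S,R,P)) with t,S,R,P ∈ F_q such that t³ + St² + Rt + P = 0, P ≠ S, and there exists U ∈ F_q with (P+S)²U² + (P+S)²U + R(S+P+R+1) = 0, equals (q³−q)/2. -/

import Mathlib

open Finset

section Aux
variable {F : Type*} [Field F] [Fintype F]
set_option linter.unusedSectionVars false

lemma char2_add_eq_zero_iff (h2 : (2:F) = 0) (a b : F) : a + b = 0 ↔ a = b := by
  constructor <;> intro h
  · linear_combination h - b * h2
  · linear_combination h + b * h2

open scoped Classical in
lemma AS_card (h2 : (2:F) = 0) :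
    2 * (Finset.univ.image fun x : F => x ^ 2 + x).card = Fintype.card F := by
  classical
  have key := Finset.card_eq_sum_card_image (fun x : F => x ^ 2 + x) Finset.univ
  have h1 : ∀ b ∈ Finset.univ.image (fun x : F => x ^ 2 + x),
      (Finset.univ.filter fun a : F => a ^ 2 + a = b).card = 2 := by
    intro b hb
    obtain ⟨a, -, ha⟩ := Finset.mem_image.mp hb
    have hset : (Finset.univ.filter fun x : F => x ^ 2 + x = b) = {a, a + 1} := by
      ext x
      simp only [Finset.mem_filter, Finset.mem_univ, true_and, Finset.mem_insert,
        Finset.mem_singleton]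
      constructor
      · intro hx
        have hz : (x - a) * (x - a + 1) = 0 := by
          linear_combination hx - ha + (a ^ 2 - a * x) * h2
        rcases mul_eq_zero.mp hz with h | h
        · exact Or.inl (sub_eq_zero.mp h)
        · exact Or.inr (by linear_combination h - h2)
      · rintro (rfl | rfl)
        · exact ha
        · linear_combination ha + (a + 1) * h2
    rw [hset]
    rw [Finset.card_insert_of_notMem (by
      simp only [Finset.mem_singleton]
      intro h
      exact (one_ne_zero : (1:F) ≠ 0) (by linear_combination -h)), Finset.card_singleton]
  rw [Finset.sum_congr rfl h1, Finset.sum_const, smul_eq_mul, Finset.card_univ] at key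
  omega

open scoped Classical in
lemma count_R (h2 : (2:F) = 0) {D : F} (hD : D ≠ 0) :
    (Finset.univ.filter fun R : F =>
        ∃ U : F, D ^ 2 * U ^ 2 + D ^ 2 * U + R * (D + R + 1) = 0).card
      = Fintype.card F / 2 := by
  classical
  have hi : D * D⁻¹ = 1 := mul_inv_cancel₀ hD
  have himg : (Finset.univ.filter fun R : F =>
      ∃ U : F, D ^ 2 * U ^ 2 + D ^ 2 * U + R * (D + R + 1) = 0)
      = Finset.univ.image fun V : F => D ^ 2 * (V ^ 2 + V) := by
    ext R
    simp only [Finset.mem_filter, Finset.mem_univ, true_and, Finset.mem_image]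
    constructor
    · rintro ⟨U, hU⟩
      refine ⟨U + R * D⁻¹, ?_⟩
      linear_combination hU + (R^2*(D*D⁻¹+1) + R*D) * hi + (D^2*U*R*D⁻¹ - R) * h2
    · rintro ⟨V, hV⟩
      refine ⟨V + R * D⁻¹, ?_⟩
      linear_combination hV + (R^2*(D*D⁻¹+1) + R*D) * hi
        + (D^2*V*R*D⁻¹ + R^2 + R*D + R) * h2
  rw [himg]
  have himg2 : (Finset.univ.image fun V : F => D ^ 2 * (V ^ 2 + V))
      = (Finset.univ.image fun x : F => x ^ 2 + x).image (fun y => D ^ 2 * y) := by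
    rw [Finset.image_image]
    rfl
  rw [himg2, Finset.card_image_of_injective _ (mul_right_injective₀ (pow_ne_zero 2 hD))]
  have := AS_card h2
  omega

end Aux

def Rest {F : Type*} [Field F] (t S R : F) : Prop :=
  t ^ 3 + S * t ^ 2 + R * t ≠ S ∧ ∃ U : F,
    (t ^ 3 + S * t ^ 2 + R * t + S) ^ 2 * U ^ 2 + (t ^ 3 + S * t ^ 2 + R * t + S) ^ 2 * U +
      R * (S + (t ^ 3 + S * t ^ 2 + R * t) + R + 1) = 0

def Sol {F : Type*} [Field F] (D R : F) : Prop :=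
  ∃ U : F, D ^ 2 * U ^ 2 + D ^ 2 * U + R * (D + R + 1) = 0

lemma rest_one {F : Type*} [Field F] [Fintype F] (h2 : (2:F) = 0) (S R : F) :
    Rest (1:F) S R ↔ R ≠ 1 := by
  unfold Rest
  constructor
  · rintro ⟨h, -⟩
    intro hR1
    exact h (by linear_combination hR1 + h2)
  · intro hR1
    refine ⟨fun h => hR1 (by linear_combination h - h2), 0, ?_⟩
    linear_combination (R * (S + R + 1)) * h2

lemma rest_iff {F : Type*} [Field F] [Fintype F] (h2 : (2:F) = 0) (t S R : F) :
    Rest t S R ↔ (S * (t+1)^2 + (t^3 + R*t) ≠ 0 ∧ Sol (S * (t+1)^2 + (t^3 + R*t)) R) := by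
  have hD : t ^ 3 + S * t ^ 2 + R * t + S = S * (t+1)^2 + (t^3 + R*t) := by
    linear_combination (-(S*t)) * h2
  have hD2 : S + (t ^ 3 + S * t ^ 2 + R * t) + R + 1 = (S * (t+1)^2 + (t^3 + R*t)) + R + 1 := by
    linear_combination (-(S*t)) * h2
  have h4 : (t ^ 3 + S * t ^ 2 + R * t + S = 0) ↔ (S * (t+1)^2 + (t^3 + R*t) = 0) := by
    rw [hD]
  have hne : (t ^ 3 + S * t ^ 2 + R * t ≠ S) ↔ (S * (t+1)^2 + (t^3 + R*t) ≠ 0) :=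
    not_congr (((char2_add_eq_zero_iff h2 _ S).symm).trans h4)
  unfold Rest Sol
  simp only [hD, hD2]
  exact and_congr hne Iff.rfl

theorem stmt10 (n q : ℕ) (hn : 0 < n) (hq : q = 2 ^ n)
    (F : Type*) [Field F] [Fintype F] (hF : Fintype.card F = q) :
    Nat.card {x : F × F × F × F |
      x.1 ^ 3 + x.2.1 * x.1 ^ 2 + x.2.2.1 * x.1 + x.2.2.2 = 0 ∧
      x.2.2.2 ≠ x.2.1 ∧ ∃ U : F,
        (x.2.2.2 + x.2.1) ^ 2 * U ^ 2 + (x.2.2.2 + x.2.1) ^ 2 * U +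
          x.2.2.1 * (x.2.1 + x.2.2.2 + x.2.2.1 + 1) = 0} = (q ^ 3 - q) / 2 := by
  classical
  have h2 : (2 : F) = 0 := by
    have hc := FiniteField.cast_card_eq_zero F
    rw [hF, hq] at hc
    have hc2 : ((2:F)) ^ n = 0 := by exact_mod_cast hc
    exact pow_eq_zero_iff (by omega : n ≠ 0) |>.mp hc2
  have hiff : ∀ a b : F, a + b = 0 ↔ a = b := char2_add_eq_zero_iff h2
  rw [Nat.card_coe_set_eq, Set.ncard_eq_toFinset_card', Set.toFinset_setOf,
      Finset.card_filter]
  simp only [Fintype.sum_prod_type]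
  have hPsum : ∀ t S R : F,
      (∑ P : F, if (t ^ 3 + S * t ^ 2 + R * t + P = 0 ∧ P ≠ S ∧ ∃ U : F,
          (P + S) ^ 2 * U ^ 2 + (P + S) ^ 2 * U + R * (S + P + R + 1) = 0) then 1 else 0)
        = if Rest t S R then 1 else 0 := by
    intro t S R
    have hc : ∀ P : F, (t ^ 3 + S * t ^ 2 + R * t + P = 0 ∧ P ≠ S ∧ ∃ U : F,
          (P + S) ^ 2 * U ^ 2 + (P + S) ^ 2 * U + R * (S + P + R + 1) = 0)
        ↔ (P = t ^ 3 + S * t ^ 2 + R * t ∧ Rest t S R) := by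
      intro P
      constructor
      · rintro ⟨ha, hb, hcc⟩
        have hP : P = t ^ 3 + S * t ^ 2 + R * t := ((hiff _ _).mp ha).symm
        subst hP
        exact ⟨rfl, hb, hcc⟩
      · rintro ⟨rfl, hb, hcc⟩
        exact ⟨(hiff _ _).mpr rfl, hb, hcc⟩
    simp only [hc, ite_and]
    rw [Finset.sum_ite_eq' Finset.univ (t ^ 3 + S * t ^ 2 + R * t)
        (fun _ => if Rest t S R then 1 else 0)]
    simp
  simp only [hPsum]
  rw [← Finset.sum_erase_add Finset.univ _ (Finset.mem_univ (1:F))]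
  have hg1 : (∑ S : F, ∑ R : F, if Rest (1:F) S R then 1 else 0) = q * (q - 1) := by
    have hro : ∀ S R : F, Rest (1:F) S R ↔ R ≠ 1 := fun S R => rest_one h2 S R
    simp only [hro]
    have hinner : (∑ R : F, if R ≠ (1:F) then 1 else 0) = q - 1 := by
      rw [← Finset.card_filter, Finset.filter_ne' Finset.univ 1,
        Finset.card_erase_of_mem (Finset.mem_univ 1), Finset.card_univ, hF]
    simp only [hinner]
    rw [Finset.sum_const, smul_eq_mul, Finset.card_univ, hF]
  have hgt : ∀ t : F, t ≠ 1 →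
      (∑ S : F, ∑ R : F, if Rest t S R then 1 else 0) = (q - 1) * (q / 2) := by
    intro t ht
    have h1t : t + 1 ≠ 0 := fun h => ht (by linear_combination h - h2)
    rw [Finset.sum_comm]
    have hSsum : ∀ R : F, (∑ S : F, if Rest t S R then 1 else 0)
        = ∑ D : F, if (D ≠ 0 ∧ Sol D R) then 1 else 0 := by
      intro R
      have hinj : Function.Injective (fun S : F => S * (t+1)^2 + (t^3 + R*t)) := by
        intro a b hab
        simp only [add_left_inj] at hab
        exact mul_right_cancel₀ (pow_ne_zero 2 h1t) hab
      have hbij := Finite.injective_iff_bijective.mp hinj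
      refine Fintype.sum_bijective _ hbij _ _ ?_
      intro S
      exact if_congr (rest_iff h2 t S R) rfl rfl
    simp only [hSsum]
    rw [Finset.sum_comm]
    have hDR : ∀ D : F, (∑ R : F, if (D ≠ 0 ∧ Sol D R) then 1 else 0)
        = if D = 0 then 0 else q / 2 := by
      intro D
      by_cases hD : D = 0
      · simp [hD]
      · have hand : ∀ R : F, (D ≠ 0 ∧ Sol D R) ↔ Sol D R := fun R => and_iff_right hD
        simp only [hand, hD, if_false]
        rw [← Finset.card_filter]
        have hcnt := count_R h2 hD
        rw [hF] at hcnt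
        convert hcnt using 2
        ext x
        simp only [Finset.mem_filter]
        exact Iff.rfl
    simp only [hDR]
    rw [Finset.sum_ite, Finset.sum_const, Finset.sum_const, smul_eq_mul, smul_eq_mul]
    have hcf : (Finset.filter (fun x : F => ¬ x = 0) Finset.univ).card = q - 1 := by
      have he : (Finset.filter (fun x : F => ¬ x = 0) Finset.univ) = Finset.univ.erase 0 := by
        ext x
        simp [Finset.mem_erase]
      rw [he, Finset.card_erase_of_mem (Finset.mem_univ 0), Finset.card_univ, hF]
    rw [hcf, mul_zero, zero_add]
  rw [Finset.sum_congr rfl (fun t ht' => hgt t (Finset.ne_of_mem_erase ht')), hg1,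
      Finset.sum_const, smul_eq_mul, Finset.card_erase_of_mem (Finset.mem_univ 1),
      Finset.card_univ, hF]
  -- arithmetic: (q-1) * ((q-1) * (q/2)) + q * (q-1) = (q^3 - q)/2
  obtain ⟨m, hm⟩ : ∃ m, q = 2 * m := ⟨2 ^ (n - 1), by
    rw [hq, ← pow_succ']
    congr 1
    omega⟩
  have hq2 : 2 ≤ q := by
    rw [hq]
    calc 2 = 2 ^ 1 := by norm_num
    _ ≤ 2 ^ n := Nat.pow_le_pow_right (by norm_num) hn
  have hm1 : 1 ≤ m := by omega
  rw [hm]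
  have hdiv : 2 * m / 2 = m := by omega
  rw [hdiv]
  obtain ⟨c, hc⟩ : ∃ c, m ^ 3 = c := ⟨_, rfl⟩
  have hcube : (2 * m) ^ 3 = 8 * c := by rw [← hc]; ring
  rw [hcube]
  have hmc : m ≤ c := le_trans (Nat.le_self_pow (by norm_num) m) hc.le
  rw [show 8 * c - 2 * m = 2 * (4 * c - m) from by omega,
    Nat.mul_div_cancel_left _ (by norm_num : 0 < 2), ← hc]
  zify [show m ≤ 4 * m ^ 3 from by nlinarith, show 1 ≤ 2 * m from by omega]
  ring
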